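/- Let r ≥ 1 and let β, γ be complex numbers with (β, γ) ≠ (0, 0). Then the pair of (2r+3)×(2r+1) complex matrices (F_r ⊕ F_{r+3}, (K_r ⊕ K_{r+3}) + β·E_{1,r} + γ·E_{1,r+1}) is equivalent to the pair (F_{r+1} ⊕ F_{r+2}, K_{r+1} ⊕ K_{r+2}). -/

import Mathlib

open Matrix

noncomputable section

/-- The `M × N` complex matrix obtained by placing the matrix `A` with its top-left corner
at (1-based) position `(ri+1, ci+1)` (i.e. with row offset `ri` and column offset `ci`),
with all other entries zero.  Block-diagonal direct sums of (possibly rectangular) matrices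
are expressed as sums of such placements along the diagonal. -/
def place {M N m n : ℕ} (ri ci : ℕ) (A : Matrix (Fin m) (Fin n) ℂ) :
    Matrix (Fin M) (Fin N) ℂ := fun i j =>
  if hi : ri ≤ (i : ℕ) ∧ (i : ℕ) < ri + m then
    if hj : ci ≤ (j : ℕ) ∧ (j : ℕ) < ci + n then
      A ⟨(i : ℕ) - ri, by omega⟩ ⟨(j : ℕ) - ci, by omega⟩
    else 0
  else 0

/-- The `r × (r-1)` matrix `F_r` with ones on the main diagonal and zeros elsewhere. -/
def MatF (r : ℕ) : Matrix (Fin r) (Fin (r - 1)) ℂ :=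
  fun i j => if (i : ℕ) = (j : ℕ) then 1 else 0

/-- The `r × (r-1)` matrix `K_r` with ones on the subdiagonal and zeros elsewhere. -/
def MatK (r : ℕ) : Matrix (Fin r) (Fin (r - 1)) ℂ :=
  fun i j => if (i : ℕ) = (j : ℕ) + 1 then 1 else 0

/-- The matrix unit `E_{a,b}` (1-based indices): entry `(a,b)` is `1`, all others `0`. -/
def Estd {M N : ℕ} (a b : ℕ) : Matrix (Fin M) (Fin N) ℂ :=
  fun i j => if (i : ℕ) + 1 = a ∧ (j : ℕ) + 1 = b then 1 else 0

/-- Two pairs `(A₁, A₂)` and `(B₁, B₂)` of `m × n` complex matrices are equivalent if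
`B₁ = R * A₁ * S` and `B₂ = R * A₂ * S` for some invertible `R`, `S`. -/
def PairEquiv {m n : ℕ} (A₁ A₂ B₁ B₂ : Matrix (Fin m) (Fin n) ℂ) : Prop :=
  ∃ (R : Matrix (Fin m) (Fin m) ℂ) (S : Matrix (Fin n) (Fin n) ℂ),
    IsUnit R ∧ IsUnit S ∧ B₁ = R * A₁ * S ∧ B₂ = R * A₂ * S


open Matrix


/-- Pattern matrix for the case `β ≠ 0`. -/
def Wm (β γ : ℂ) (p : ℕ) (i k : ℕ) : ℂ :=
  if i ≤ p then
    (if k = i ∧ i < p then -γ else 0) + (if k + 1 = i then β else 0) +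
    (if k = p + i + 2 then γ ^ 2 else 0) + (if i = 0 ∧ k = p then β ^ 2 else 0) +
    (if i = 0 ∧ k = p + 1 then β * γ else 0)
  else
    (if k + p + 1 = i ∧ i ≤ 2 * p then -1 else 0) + (if k = i then β else 0) +
    (if k = i + 1 then γ else 0)

/-- Pattern matrix for the case `β = 0`, `γ ≠ 0`. -/
def W0m (γ : ℂ) (p : ℕ) (i k : ℕ) : ℂ :=
  if i ≤ p then
    (if k = i ∧ i < p then -γ else 0) + (if k = p + i + 2 then γ ^ 2 else 0)
  else
    (if k + 1 = i ∧ i ≤ p + 2 then -γ else 0) + (if k + p + 3 = i then -1 else 0)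

lemma Wm_low (β γ : ℂ) (p i k : ℕ) (h : i ≤ p) : Wm β γ p i k =
    (if k = i ∧ i < p then -γ else 0) + (if k + 1 = i then β else 0) +
    (if k = p + i + 2 then γ ^ 2 else 0) + (if i = 0 ∧ k = p then β ^ 2 else 0) +
    (if i = 0 ∧ k = p + 1 then β * γ else 0) := by rw [Wm, if_pos h]

lemma Wm_high (β γ : ℂ) (p i k : ℕ) (h : ¬ i ≤ p) : Wm β γ p i k =
    (if k + p + 1 = i ∧ i ≤ 2 * p then -1 else 0) + (if k = i then β else 0) +
    (if k = i + 1 then γ else 0) := by rw [Wm, if_neg h]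

lemma W0m_low (γ : ℂ) (p i k : ℕ) (h : i ≤ p) : W0m γ p i k =
    (if k = i ∧ i < p then -γ else 0) + (if k = p + i + 2 then γ ^ 2 else 0) := by
  rw [W0m, if_pos h]

lemma W0m_high (γ : ℂ) (p i k : ℕ) (h : ¬ i ≤ p) : W0m γ p i k =
    (if k + 1 = i ∧ i ≤ p + 2 then -γ else 0) + (if k + p + 3 = i then -1 else 0) := by
  rw [W0m, if_neg h]

set_option maxHeartbeats 1000000 in
lemma key1 (β γ : ℂ) (s i j : ℕ) (hi : i < 2*s+5) (hj : j < 2*s+3) :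
    (if j+1 < s+1 then Wm β γ (s+1) i j else Wm β γ (s+1) i (j+1)) =
      (if i ≤ s then Wm β γ s i j
       else if s+2 ≤ i ∧ i ≤ 2*s+3 then Wm β γ s (i-1) j else 0) := by
  rcases Nat.lt_or_ge (j+1) (s+1) with hj1 | hj1
  · rw [if_pos hj1]
    rcases (by omega : i ≤ s ∨ i = s+1 ∨ (s+2 ≤ i ∧ i ≤ 2*s+3) ∨ i = 2*s+4) with h | h | h | h
    · rw [if_pos h, Wm_low β γ (s+1) i j (by omega), Wm_low β γ s i j (by omega)]
      split_ifs <;> first | (exfalso; omega) | ring1 | (exfalso; tauto)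
    · rw [if_neg (by omega), if_neg (by omega), Wm_low β γ (s+1) i j (by omega)]
      split_ifs <;> first | (exfalso; omega) | ring1 | (exfalso; tauto)
    · rw [if_neg (by omega), if_pos h, Wm_high β γ (s+1) i j (by omega),
        Wm_high β γ s (i-1) j (by omega)]
      split_ifs <;> first | (exfalso; omega) | ring1 | (exfalso; tauto)
    · rw [if_neg (by omega), if_neg (by omega), Wm_high β γ (s+1) i j (by omega)]
      split_ifs <;> first | (exfalso; omega) | ring1 | (exfalso; tauto)
  · rw [if_neg (by omega)]
    rcases (by omega : i ≤ s ∨ i = s+1 ∨ (s+2 ≤ i ∧ i ≤ 2*s+3) ∨ i = 2*s+4) with h | h | h | h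
    · rw [if_pos h, Wm_low β γ (s+1) i (j+1) (by omega), Wm_low β γ s i j (by omega)]
      split_ifs <;> first | (exfalso; omega) | ring1 | (exfalso; tauto)
    · rw [if_neg (by omega), if_neg (by omega), Wm_low β γ (s+1) i (j+1) (by omega)]
      split_ifs <;> first | (exfalso; omega) | ring1 | (exfalso; tauto)
    · rw [if_neg (by omega), if_pos h, Wm_high β γ (s+1) i (j+1) (by omega),
        Wm_high β γ s (i-1) j (by omega)]
      split_ifs <;> first | (exfalso; omega) | ring1 | (exfalso; tauto)
    · rw [if_neg (by omega), if_neg (by omega), Wm_high β γ (s+1) i (j+1) (by omega)]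
      split_ifs <;> first | (exfalso; omega) | ring1 | (exfalso; tauto)
lemma WmZ0 (β γ : ℂ) (s : ℕ) : Wm β γ (s+1) 0 0 = -γ := by
  rw [Wm_low β γ (s+1) 0 0 (by omega)]
  split_ifs <;> first | (exfalso; omega) | ring1 | (exfalso; tauto)

lemma WmZ1 (β γ : ℂ) (s : ℕ) : Wm β γ (s+1) 1 0 = β := by
  rw [Wm_low β γ (s+1) 1 0 (by omega)]
  split_ifs <;> first | (exfalso; omega) | ring1 | (exfalso; tauto)

lemma WmZ2 (β γ : ℂ) (s : ℕ) : Wm β γ (s+1) (s+2) 0 = -1 := by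
  rw [Wm_high β γ (s+1) (s+2) 0 (by omega)]
  split_ifs <;> first | (exfalso; omega) | ring1 | (exfalso; tauto)

lemma WmZv (β γ : ℂ) (s i : ℕ) (h0 : i ≠ 0) (h1 : i ≠ 1) (h2 : i ≠ s+2) :
    Wm β γ (s+1) i 0 = 0 := by
  rw [Wm]
  split_ifs <;> first | (exfalso; omega) | ring1 | (exfalso; tauto)

lemma W0Z0 (γ : ℂ) (s : ℕ) : W0m γ (s+1) 0 0 = -γ := by
  rw [W0m_low γ (s+1) 0 0 (by omega)]
  split_ifs <;> first | (exfalso; omega) | ring1 | (exfalso; tauto)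

lemma W0Z2 (γ : ℂ) (s : ℕ) : W0m γ (s+1) (s+4) 0 = -1 := by
  rw [W0m_high γ (s+1) (s+4) 0 (by omega)]
  split_ifs <;> first | (exfalso; omega) | ring1 | (exfalso; tauto)

lemma W0Zv (γ : ℂ) (s i : ℕ) (h0 : i ≠ 0) (h2 : i ≠ s+4) :
    W0m γ (s+1) i 0 = 0 := by
  rw [W0m]
  split_ifs <;> first | (exfalso; omega) | ring1 | (exfalso; tauto)

set_option maxHeartbeats 2000000 in
lemma key2 (β γ : ℂ) (s i j : ℕ) (hi : i < 2*s+5) (hj : j < 2*s+3) :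
    (if j+1 < s+1 then Wm β γ (s+1) i (j+1) else Wm β γ (s+1) i (j+2)) +
      Wm β γ (s+1) i 0 * (if j+1 = s+1 then β else if j = s+1 then γ else 0) =
      (if 1 ≤ i ∧ i ≤ s+1 then Wm β γ s (i-1) j
       else if s+3 ≤ i then Wm β γ s (i-2) j else 0) := by
  rcases (by omega : j+1 < s+1 ∨ j = s ∨ j = s+1 ∨ s+2 ≤ j) with hj1 | hj1 | hj1 | hj1
  · rw [if_pos (show j+1 < s+1 by omega), if_neg (show ¬ j+1 = s+1 by omega),
      if_neg (show ¬ j = s+1 by omega), mul_zero, add_zero]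
    rcases (by omega : i = 0 ∨ (1 ≤ i ∧ i ≤ s+1) ∨ i = s+2 ∨ s+3 ≤ i) with h | h | h | h
    · rw [if_neg (show ¬(1 ≤ i ∧ i ≤ s+1) by omega), if_neg (show ¬ s+3 ≤ i by omega),
        Wm_low β γ (s+1) i (j+1) (by omega)]
      split_ifs <;> first | (exfalso; omega) | ring1 | (exfalso; tauto)
    · rw [if_pos h, Wm_low β γ (s+1) i (j+1) (by omega), Wm_low β γ s (i-1) j (by omega)]
      split_ifs <;> first | (exfalso; omega) | ring1 | (exfalso; tauto)
    · rw [if_neg (show ¬(1 ≤ i ∧ i ≤ s+1) by omega), if_neg (show ¬ s+3 ≤ i by omega),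
        Wm_high β γ (s+1) i (j+1) (by omega)]
      split_ifs <;> first | (exfalso; omega) | ring1 | (exfalso; tauto)
    · rw [if_neg (show ¬(1 ≤ i ∧ i ≤ s+1) by omega), if_pos (show s+3 ≤ i by omega),
        Wm_high β γ (s+1) i (j+1) (by omega), Wm_high β γ s (i-2) j (by omega)]
      split_ifs <;> first | (exfalso; omega) | ring1 | (exfalso; tauto)
  · rw [if_neg (show ¬ j+1 < s+1 by omega), if_pos (show j+1 = s+1 by omega)]
    rcases (by omega : i = 0 ∨ i = 1 ∨ (2 ≤ i ∧ i ≤ s+1) ∨ i = s+2 ∨ s+3 ≤ i)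
      with h | h | h | h | h
    · subst h
      rw [if_neg (show ¬(1 ≤ 0 ∧ 0 ≤ s+1) by omega), if_neg (show ¬ s+3 ≤ 0 by omega),
        WmZ0, Wm_low β γ (s+1) 0 (j+2) (by omega)]
      split_ifs <;> first | (exfalso; omega) | ring1 | (exfalso; tauto)
    · subst h
      rw [if_pos (show 1 ≤ 1 ∧ 1 ≤ s+1 by omega), WmZ1,
        Wm_low β γ (s+1) 1 (j+2) (by omega), Wm_low β γ s 0 j (by omega)]
      split_ifs <;> first | (exfalso; omega) | ring1 | (exfalso; tauto)
    · rw [if_pos (show 1 ≤ i ∧ i ≤ s+1 by omega), WmZv β γ s i (by omega) (by omega) (by omega),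
        zero_mul, add_zero, Wm_low β γ (s+1) i (j+2) (by omega), Wm_low β γ s (i-1) j (by omega)]
      split_ifs <;> first | (exfalso; omega) | ring1 | (exfalso; tauto)
    · subst h
      rw [if_neg (show ¬(1 ≤ s+2 ∧ s+2 ≤ s+1) by omega), if_neg (show ¬ s+3 ≤ s+2 by omega),
        WmZ2, Wm_high β γ (s+1) (s+2) (j+2) (by omega)]
      split_ifs <;> first | (exfalso; omega) | ring1 | (exfalso; tauto)
    · rw [if_neg (show ¬(1 ≤ i ∧ i ≤ s+1) by omega), if_pos (show s+3 ≤ i by omega),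
        WmZv β γ s i (by omega) (by omega) (by omega), zero_mul, add_zero,
        Wm_high β γ (s+1) i (j+2) (by omega), Wm_high β γ s (i-2) j (by omega)]
      split_ifs <;> first | (exfalso; omega) | ring1 | (exfalso; tauto)
  · rw [if_neg (show ¬ j+1 < s+1 by omega), if_neg (show ¬ j+1 = s+1 by omega),
      if_pos (show j = s+1 by omega)]
    rcases (by omega : i = 0 ∨ i = 1 ∨ (2 ≤ i ∧ i ≤ s+1) ∨ i = s+2 ∨ s+3 ≤ i)
      with h | h | h | h | h
    · subst h
      rw [if_neg (show ¬(1 ≤ 0 ∧ 0 ≤ s+1) by omega), if_neg (show ¬ s+3 ≤ 0 by omega),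
        WmZ0, Wm_low β γ (s+1) 0 (j+2) (by omega)]
      split_ifs <;> first | (exfalso; omega) | ring1 | (exfalso; tauto)
    · subst h
      rw [if_pos (show 1 ≤ 1 ∧ 1 ≤ s+1 by omega), WmZ1,
        Wm_low β γ (s+1) 1 (j+2) (by omega), Wm_low β γ s 0 j (by omega)]
      split_ifs <;> first | (exfalso; omega) | ring1 | (exfalso; tauto)
    · rw [if_pos (show 1 ≤ i ∧ i ≤ s+1 by omega), WmZv β γ s i (by omega) (by omega) (by omega),
        zero_mul, add_zero, Wm_low β γ (s+1) i (j+2) (by omega), Wm_low β γ s (i-1) j (by omega)]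
      split_ifs <;> first | (exfalso; omega) | ring1 | (exfalso; tauto)
    · subst h
      rw [if_neg (show ¬(1 ≤ s+2 ∧ s+2 ≤ s+1) by omega), if_neg (show ¬ s+3 ≤ s+2 by omega),
        WmZ2, Wm_high β γ (s+1) (s+2) (j+2) (by omega)]
      split_ifs <;> first | (exfalso; omega) | ring1 | (exfalso; tauto)
    · rw [if_neg (show ¬(1 ≤ i ∧ i ≤ s+1) by omega), if_pos (show s+3 ≤ i by omega),
        WmZv β γ s i (by omega) (by omega) (by omega), zero_mul, add_zero,
        Wm_high β γ (s+1) i (j+2) (by omega), Wm_high β γ s (i-2) j (by omega)]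
      split_ifs <;> first | (exfalso; omega) | ring1 | (exfalso; tauto)
  · rw [if_neg (show ¬ j+1 < s+1 by omega), if_neg (show ¬ j+1 = s+1 by omega),
      if_neg (show ¬ j = s+1 by omega), mul_zero, add_zero]
    rcases (by omega : i = 0 ∨ (1 ≤ i ∧ i ≤ s+1) ∨ i = s+2 ∨ s+3 ≤ i) with h | h | h | h
    · rw [if_neg (show ¬(1 ≤ i ∧ i ≤ s+1) by omega), if_neg (show ¬ s+3 ≤ i by omega),
        Wm_low β γ (s+1) i (j+2) (by omega)]
      split_ifs <;> first | (exfalso; omega) | ring1 | (exfalso; tauto)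
    · rw [if_pos h, Wm_low β γ (s+1) i (j+2) (by omega), Wm_low β γ s (i-1) j (by omega)]
      split_ifs <;> first | (exfalso; omega) | ring1 | (exfalso; tauto)
    · rw [if_neg (show ¬(1 ≤ i ∧ i ≤ s+1) by omega), if_neg (show ¬ s+3 ≤ i by omega),
        Wm_high β γ (s+1) i (j+2) (by omega)]
      split_ifs <;> first | (exfalso; omega) | ring1 | (exfalso; tauto)
    · rw [if_neg (show ¬(1 ≤ i ∧ i ≤ s+1) by omega), if_pos (show s+3 ≤ i by omega),
        Wm_high β γ (s+1) i (j+2) (by omega), Wm_high β γ s (i-2) j (by omega)]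
      split_ifs <;> first | (exfalso; omega) | ring1 | (exfalso; tauto)
set_option maxHeartbeats 1000000 in
lemma key1z (γ : ℂ) (s i j : ℕ) (hi : i < 2*s+5) (hj : j < 2*s+3) :
    (if j+1 < s+1 then W0m γ (s+1) i j else W0m γ (s+1) i (j+1)) =
      (if i ≤ s then W0m γ s i j
       else if s+2 ≤ i ∧ i ≤ 2*s+3 then W0m γ s (i-1) j else 0) := by
  rcases Nat.lt_or_ge (j+1) (s+1) with hj1 | hj1
  · rw [if_pos hj1]
    rcases (by omega : i ≤ s ∨ i = s+1 ∨ (s+2 ≤ i ∧ i ≤ 2*s+3) ∨ i = 2*s+4) with h | h | h | h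
    · rw [if_pos h, W0m_low γ (s+1) i j (by omega), W0m_low γ s i j (by omega)]
      split_ifs <;> first | (exfalso; omega) | ring1 | (exfalso; tauto)
    · rw [if_neg (by omega), if_neg (by omega), W0m_low γ (s+1) i j (by omega)]
      split_ifs <;> first | (exfalso; omega) | ring1 | (exfalso; tauto)
    · rw [if_neg (by omega), if_pos h, W0m_high γ (s+1) i j (by omega),
        W0m_high γ s (i-1) j (by omega)]
      split_ifs <;> first | (exfalso; omega) | ring1 | (exfalso; tauto)
    · rw [if_neg (by omega), if_neg (by omega), W0m_high γ (s+1) i j (by omega)]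
      split_ifs <;> first | (exfalso; omega) | ring1 | (exfalso; tauto)
  · rw [if_neg (by omega)]
    rcases (by omega : i ≤ s ∨ i = s+1 ∨ (s+2 ≤ i ∧ i ≤ 2*s+3) ∨ i = 2*s+4) with h | h | h | h
    · rw [if_pos h, W0m_low γ (s+1) i (j+1) (by omega), W0m_low γ s i j (by omega)]
      split_ifs <;> first | (exfalso; omega) | ring1 | (exfalso; tauto)
    · rw [if_neg (by omega), if_neg (by omega), W0m_low γ (s+1) i (j+1) (by omega)]
      split_ifs <;> first | (exfalso; omega) | ring1 | (exfalso; tauto)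
    · rw [if_neg (by omega), if_pos h, W0m_high γ (s+1) i (j+1) (by omega),
        W0m_high γ s (i-1) j (by omega)]
      split_ifs <;> first | (exfalso; omega) | ring1 | (exfalso; tauto)
    · rw [if_neg (by omega), if_neg (by omega), W0m_high γ (s+1) i (j+1) (by omega)]
      split_ifs <;> first | (exfalso; omega) | ring1 | (exfalso; tauto)

set_option maxHeartbeats 2000000 in
lemma key2z (γ : ℂ) (s i j : ℕ) (hi : i < 2*s+5) (hj : j < 2*s+3) :
    (if j+1 < s+1 then W0m γ (s+1) i (j+1) else W0m γ (s+1) i (j+2)) +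
      W0m γ (s+1) i 0 * (if j+1 = s+1 then (0:ℂ) else if j = s+1 then γ else 0) =
      (if 1 ≤ i ∧ i ≤ s+1 then W0m γ s (i-1) j
       else if s+3 ≤ i then W0m γ s (i-2) j else 0) := by
  rcases (by omega : j+1 < s+1 ∨ j = s ∨ j = s+1 ∨ s+2 ≤ j) with hj1 | hj1 | hj1 | hj1
  · rw [if_pos (show j+1 < s+1 by omega), if_neg (show ¬ j+1 = s+1 by omega),
      if_neg (show ¬ j = s+1 by omega), mul_zero, add_zero]
    rcases (by omega : i = 0 ∨ (1 ≤ i ∧ i ≤ s+1) ∨ i = s+2 ∨ s+3 ≤ i) with h | h | h | h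
    · rw [if_neg (show ¬(1 ≤ i ∧ i ≤ s+1) by omega), if_neg (show ¬ s+3 ≤ i by omega),
        W0m_low γ (s+1) i (j+1) (by omega)]
      split_ifs <;> first | (exfalso; omega) | ring1 | (exfalso; tauto)
    · rw [if_pos h, W0m_low γ (s+1) i (j+1) (by omega), W0m_low γ s (i-1) j (by omega)]
      split_ifs <;> first | (exfalso; omega) | ring1 | (exfalso; tauto)
    · rw [if_neg (show ¬(1 ≤ i ∧ i ≤ s+1) by omega), if_neg (show ¬ s+3 ≤ i by omega),
        W0m_high γ (s+1) i (j+1) (by omega)]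
      split_ifs <;> first | (exfalso; omega) | ring1 | (exfalso; tauto)
    · rw [if_neg (show ¬(1 ≤ i ∧ i ≤ s+1) by omega), if_pos (show s+3 ≤ i by omega),
        W0m_high γ (s+1) i (j+1) (by omega), W0m_high γ s (i-2) j (by omega)]
      split_ifs <;> first | (exfalso; omega) | ring1 | (exfalso; tauto)
  · rw [if_neg (show ¬ j+1 < s+1 by omega), if_pos (show j+1 = s+1 by omega),
      mul_zero, add_zero]
    rcases (by omega : i = 0 ∨ (1 ≤ i ∧ i ≤ s+1) ∨ i = s+2 ∨ s+3 ≤ i) with h | h | h | h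
    · rw [if_neg (show ¬(1 ≤ i ∧ i ≤ s+1) by omega), if_neg (show ¬ s+3 ≤ i by omega),
        W0m_low γ (s+1) i (j+2) (by omega)]
      split_ifs <;> first | (exfalso; omega) | ring1 | (exfalso; tauto)
    · rw [if_pos h, W0m_low γ (s+1) i (j+2) (by omega), W0m_low γ s (i-1) j (by omega)]
      split_ifs <;> first | (exfalso; omega) | ring1 | (exfalso; tauto)
    · rw [if_neg (show ¬(1 ≤ i ∧ i ≤ s+1) by omega), if_neg (show ¬ s+3 ≤ i by omega),
        W0m_high γ (s+1) i (j+2) (by omega)]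
      split_ifs <;> first | (exfalso; omega) | ring1 | (exfalso; tauto)
    · rw [if_neg (show ¬(1 ≤ i ∧ i ≤ s+1) by omega), if_pos (show s+3 ≤ i by omega),
        W0m_high γ (s+1) i (j+2) (by omega), W0m_high γ s (i-2) j (by omega)]
      split_ifs <;> first | (exfalso; omega) | ring1 | (exfalso; tauto)
  · rw [if_neg (show ¬ j+1 < s+1 by omega), if_neg (show ¬ j+1 = s+1 by omega),
      if_pos (show j = s+1 by omega)]
    rcases (by omega : i = 0 ∨ (1 ≤ i ∧ i ≤ s+1) ∨ i = s+2 ∨ i = s+4 ∨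
      (s+3 ≤ i ∧ i ≠ s+4)) with h | h | h | h | h
    · subst h
      rw [if_neg (show ¬(1 ≤ 0 ∧ 0 ≤ s+1) by omega), if_neg (show ¬ s+3 ≤ 0 by omega),
        W0Z0, W0m_low γ (s+1) 0 (j+2) (by omega)]
      split_ifs <;> first | (exfalso; omega) | ring1 | (exfalso; tauto)
    · rw [if_pos h, W0Zv γ s i (by omega) (by omega), zero_mul, add_zero,
        W0m_low γ (s+1) i (j+2) (by omega), W0m_low γ s (i-1) j (by omega)]
      split_ifs <;> first | (exfalso; omega) | ring1 | (exfalso; tauto)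
    · rw [if_neg (show ¬(1 ≤ i ∧ i ≤ s+1) by omega), if_neg (show ¬ s+3 ≤ i by omega),
        W0Zv γ s i (by omega) (by omega), zero_mul, add_zero,
        W0m_high γ (s+1) i (j+2) (by omega)]
      split_ifs <;> first | (exfalso; omega) | ring1 | (exfalso; tauto)
    · subst h
      rw [if_neg (show ¬(1 ≤ s+4 ∧ s+4 ≤ s+1) by omega), if_pos (show s+3 ≤ s+4 by omega),
        W0Z2, W0m_high γ (s+1) (s+4) (j+2) (by omega), W0m_high γ s (s+4-2) j (by omega)]
      split_ifs <;> first | (exfalso; omega) | ring1 | (exfalso; tauto)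
    · rw [if_neg (show ¬(1 ≤ i ∧ i ≤ s+1) by omega), if_pos (show s+3 ≤ i by omega),
        W0Zv γ s i (by omega) (by omega), zero_mul, add_zero,
        W0m_high γ (s+1) i (j+2) (by omega), W0m_high γ s (i-2) j (by omega)]
      split_ifs <;> first | (exfalso; omega) | ring1 | (exfalso; tauto)
  · rw [if_neg (show ¬ j+1 < s+1 by omega), if_neg (show ¬ j+1 = s+1 by omega),
      if_neg (show ¬ j = s+1 by omega), mul_zero, add_zero]
    rcases (by omega : i = 0 ∨ (1 ≤ i ∧ i ≤ s+1) ∨ i = s+2 ∨ s+3 ≤ i) with h | h | h | h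
    · rw [if_neg (show ¬(1 ≤ i ∧ i ≤ s+1) by omega), if_neg (show ¬ s+3 ≤ i by omega),
        W0m_low γ (s+1) i (j+2) (by omega)]
      split_ifs <;> first | (exfalso; omega) | ring1 | (exfalso; tauto)
    · rw [if_pos h, W0m_low γ (s+1) i (j+2) (by omega), W0m_low γ s (i-1) j (by omega)]
      split_ifs <;> first | (exfalso; omega) | ring1 | (exfalso; tauto)
    · rw [if_neg (show ¬(1 ≤ i ∧ i ≤ s+1) by omega), if_neg (show ¬ s+3 ≤ i by omega),
        W0m_high γ (s+1) i (j+2) (by omega)]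
      split_ifs <;> first | (exfalso; omega) | ring1 | (exfalso; tauto)
    · rw [if_neg (show ¬(1 ≤ i ∧ i ≤ s+1) by omega), if_pos (show s+3 ≤ i by omega),
        W0m_high γ (s+1) i (j+2) (by omega), W0m_high γ s (i-2) j (by omega)]
      split_ifs <;> first | (exfalso; omega) | ring1 | (exfalso; tauto)
set_option maxHeartbeats 4000000

lemma finmk_ne {n a b : ℕ} (ha : a < n) (hb : b < n) (h : a ≠ b) :
    (⟨a, ha⟩ : Fin n) ≠ ⟨b, hb⟩ := fun hh => h (congrArg Fin.val hh)

lemma sumOne {n : ℕ} (f : Fin n → ℂ) (a : Fin n) (h : ∀ i, i ≠ a → f i = 0) :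
    ∑ i, f i = f a :=
  Finset.sum_eq_single_of_mem a (Finset.mem_univ a) (fun b _ hb => h b hb)

lemma sumTwo {n : ℕ} (f : Fin n → ℂ) (a b : Fin n) (hab : a ≠ b)
    (h : ∀ i, i ≠ a → i ≠ b → f i = 0) : ∑ i, f i = f a + f b := by
  classical
  have h1 : ∑ i, f i = ∑ i ∈ ({a, b} : Finset (Fin n)), f i := by
    refine (Finset.sum_subset (Finset.subset_univ _) ?_).symm
    intro i _ hi
    simp only [Finset.mem_insert, Finset.mem_singleton, not_or] at hi
    exact h i hi.1 hi.2
  rw [h1, Finset.sum_insert (by simpa using hab), Finset.sum_singleton]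

lemma sumThree {n : ℕ} (f : Fin n → ℂ) (a b c : Fin n) (hab : a ≠ b) (hac : a ≠ c)
    (hbc : b ≠ c) (h : ∀ i, i ≠ a → i ≠ b → i ≠ c → f i = 0) :
    ∑ i, f i = f a + f b + f c := by
  classical
  have h1 : ∑ i, f i = ∑ i ∈ ({a, b, c} : Finset (Fin n)), f i := by
    refine (Finset.sum_subset (Finset.subset_univ _) ?_).symm
    intro i _ hi
    simp only [Finset.mem_insert, Finset.mem_singleton, not_or] at hi
    exact h i hi.1 hi.2.1 hi.2.2
  rw [h1, Finset.sum_insert (by simp [hab, hac]),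
    Finset.sum_insert (by simpa using hbc), Finset.sum_singleton, add_assoc]

/-- `∑ k, f k * (if k = c then d else 0) = f c * d`. -/
lemma sum_mul_ind {n : ℕ} (f : Fin n → ℂ) (c : ℕ) (hc : c < n) (d : ℂ) (g : Fin n → ℂ)
    (hg : ∀ k, g k = if (k : ℕ) = c then d else 0) :
    ∑ k, f k * g k = f ⟨c, hc⟩ * d := by
  rw [sumOne (fun k => f k * g k) ⟨c, hc⟩ ?_]
  · show f ⟨c, hc⟩ * g ⟨c, hc⟩ = f ⟨c, hc⟩ * d
    rw [hg, if_pos rfl]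
  · intro i hi
    show f i * g i = 0
    rw [hg, if_neg, mul_zero]
    exact fun hh => hi (Fin.ext hh)

lemma ind_mul_sum {n : ℕ} (f : Fin n → ℂ) (c : ℕ) (hc : c < n) (g : Fin n → ℂ)
    (hg : ∀ k, g k = if (k : ℕ) = c then 1 else 0) :
    ∑ k, g k * f k = f ⟨c, hc⟩ := by
  rw [sumOne (fun k => g k * f k) ⟨c, hc⟩ ?_]
  · show g ⟨c, hc⟩ * f ⟨c, hc⟩ = f ⟨c, hc⟩
    rw [hg, if_pos rfl, one_mul]
  · intro i hi
    show g i * f i = 0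
    rw [hg, if_neg, zero_mul]
    exact fun hh => hi (Fin.ext hh)

lemma A1_apply (r : ℕ) (hr : 1 ≤ r) (k : Fin (2*r+3)) (j : Fin (2*r+1)) :
    (place 0 0 (MatF r) + place r (r-1) (MatF (r+3)) :
      Matrix (Fin (2*r+3)) (Fin (2*r+1)) ℂ) k j =
      if (k:ℕ) = (if (j:ℕ)+1 < r then (j:ℕ) else (j:ℕ)+1) then 1 else 0 := by
  have hk := k.isLt; have hj := j.isLt
  simp only [Matrix.add_apply, place, MatF, Fin.val_mk]
  split_ifs <;> first | (exfalso; omega) | norm_num | (exfalso; tauto)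

lemma A2_apply (r : ℕ) (hr : 1 ≤ r) (β γ : ℂ) (k : Fin (2*r+3)) (j : Fin (2*r+1)) :
    (place 0 0 (MatK r) + place r (r-1) (MatK (r+3)) + β • Estd 1 r + γ • Estd 1 (r+1) :
      Matrix (Fin (2*r+3)) (Fin (2*r+1)) ℂ) k j =
      (if (k:ℕ) = (if (j:ℕ)+1 < r then (j:ℕ)+1 else (j:ℕ)+2) then 1 else 0) +
      (if (k:ℕ) = 0 then (if (j:ℕ)+1 = r then β else if (j:ℕ) = r then γ else 0) else 0) := by
  have hk := k.isLt; have hj := j.isLt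
  simp only [Matrix.add_apply, Matrix.smul_apply, place, MatK, Estd, Fin.val_mk,
    smul_eq_mul]
  split_ifs <;> first | (exfalso; omega) | ring1 | (exfalso; tauto)

lemma B1_apply (r : ℕ) (hr : 1 ≤ r) (i : Fin (2*r+3)) (k : Fin (2*r+1)) :
    (place 0 0 (MatF (r+1)) + place (r+1) r (MatF (r+2)) :
      Matrix (Fin (2*r+3)) (Fin (2*r+1)) ℂ) i k =
      if (i:ℕ) = (if (k:ℕ) < r then (k:ℕ) else (k:ℕ)+1) then 1 else 0 := by
  have hk := k.isLt; have hi := i.isLt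
  simp only [Matrix.add_apply, place, MatF, Fin.val_mk]
  split_ifs <;> first | (exfalso; omega) | norm_num | (exfalso; tauto)

lemma B2_apply (r : ℕ) (hr : 1 ≤ r) (i : Fin (2*r+3)) (k : Fin (2*r+1)) :
    (place 0 0 (MatK (r+1)) + place (r+1) r (MatK (r+2)) :
      Matrix (Fin (2*r+3)) (Fin (2*r+1)) ℂ) i k =
      if (i:ℕ) = (if (k:ℕ) < r then (k:ℕ)+1 else (k:ℕ)+2) then 1 else 0 := by
  have hk := k.isLt; have hi := i.isLt
  simp only [Matrix.add_apply, place, MatK, Fin.val_mk]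
  split_ifs <;> first | (exfalso; omega) | norm_num | (exfalso; tauto)

lemma RA1 (r : ℕ) (hr : 1 ≤ r) (R : Matrix (Fin (2*r+3)) (Fin (2*r+3)) ℂ)
    (i : Fin (2*r+3)) (j : Fin (2*r+1)) :
    (R * (place 0 0 (MatF r) + place r (r-1) (MatF (r+3)) : Matrix (Fin (2*r+3)) (Fin (2*r+1)) ℂ)) i j =
      if h : (j:ℕ)+1 < r then R i ⟨(j:ℕ), by omega⟩ else R i ⟨(j:ℕ)+1, by omega⟩ := by
  rw [Matrix.mul_apply]
  simp only [A1_apply r hr]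
  by_cases h : (j:ℕ)+1 < r
  · rw [dif_pos h, if_pos h]
    exact (sum_mul_ind (fun k => R i k) (j:ℕ) (by omega) 1 _ (fun k => rfl)).trans
      (mul_one _)
  · rw [dif_neg h, if_neg h]
    exact (sum_mul_ind (fun k => R i k) ((j:ℕ)+1) (by omega) 1 _ (fun k => rfl)).trans
      (mul_one _)

lemma RA2 (r : ℕ) (hr : 1 ≤ r) (β γ : ℂ) (R : Matrix (Fin (2*r+3)) (Fin (2*r+3)) ℂ)
    (i : Fin (2*r+3)) (j : Fin (2*r+1)) :
    (R * (place 0 0 (MatK r) + place r (r-1) (MatK (r+3)) + β • Estd 1 r +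
        γ • Estd 1 (r+1) : Matrix (Fin (2*r+3)) (Fin (2*r+1)) ℂ)) i j =
      (if h : (j:ℕ)+1 < r then R i ⟨(j:ℕ)+1, by omega⟩ else R i ⟨(j:ℕ)+2, by omega⟩) +
        R i ⟨0, by omega⟩ * (if (j:ℕ)+1 = r then β else if (j:ℕ) = r then γ else 0) := by
  rw [Matrix.mul_apply]
  simp only [A2_apply r hr β γ, mul_add]
  rw [Finset.sum_add_distrib]
  congr 1
  · by_cases h : (j:ℕ)+1 < r
    · rw [dif_pos h, if_pos h]
      exact (sum_mul_ind (fun k => R i k) ((j:ℕ)+1) (by omega) 1 _ (fun k => rfl)).trans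
        (mul_one _)
    · rw [dif_neg h, if_neg h]
      exact (sum_mul_ind (fun k => R i k) ((j:ℕ)+2) (by omega) 1 _ (fun k => rfl)).trans
        (mul_one _)
  · exact sum_mul_ind (fun k => R i k) 0 (by omega) _ _ (fun k => rfl)

lemma BU1 (r : ℕ) (hr : 1 ≤ r) (U : Matrix (Fin (2*r+1)) (Fin (2*r+1)) ℂ)
    (i : Fin (2*r+3)) (j : Fin (2*r+1)) :
    ((place 0 0 (MatF (r+1)) + place (r+1) r (MatF (r+2)) :
        Matrix (Fin (2*r+3)) (Fin (2*r+1)) ℂ) * U) i j =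
      if h : (i:ℕ) ≤ r-1 then U ⟨(i:ℕ), by omega⟩ j
      else if h2 : r+1 ≤ (i:ℕ) ∧ (i:ℕ) ≤ 2*r+1 then U ⟨(i:ℕ)-1, by omega⟩ j else 0 := by
  have hi := i.isLt
  rw [Matrix.mul_apply]
  simp only [B1_apply r hr]
  by_cases h : (i:ℕ) ≤ r-1
  · rw [dif_pos h]
    have hcong : ∀ k : Fin (2*r+1),
        (if (i:ℕ) = (if (k:ℕ) < r then (k:ℕ) else (k:ℕ)+1) then (1:ℂ) else 0) =
        if (k:ℕ) = (i:ℕ) then 1 else 0 := fun k =>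
      if_congr (by split_ifs <;> omega) rfl rfl
    simp only [hcong]
    exact ind_mul_sum (fun k => U k j) (i:ℕ) (by omega) _ (fun k => rfl)
  · rw [dif_neg h]
    by_cases h2 : r+1 ≤ (i:ℕ) ∧ (i:ℕ) ≤ 2*r+1
    · rw [dif_pos h2]
      have hcong : ∀ k : Fin (2*r+1),
          (if (i:ℕ) = (if (k:ℕ) < r then (k:ℕ) else (k:ℕ)+1) then (1:ℂ) else 0) =
          if (k:ℕ) = (i:ℕ)-1 then 1 else 0 := fun k => by
        have hk := k.isLt
        exact if_congr (by split_ifs <;> omega) rfl rfl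
      simp only [hcong]
      exact ind_mul_sum (fun k => U k j) ((i:ℕ)-1) (by omega) _ (fun k => rfl)
    · rw [dif_neg h2]
      refine Finset.sum_eq_zero (fun k _ => ?_)
      have hk := k.isLt
      rw [if_neg (by split_ifs <;> omega), zero_mul]

lemma BU2 (r : ℕ) (hr : 1 ≤ r) (U : Matrix (Fin (2*r+1)) (Fin (2*r+1)) ℂ)
    (i : Fin (2*r+3)) (j : Fin (2*r+1)) :
    ((place 0 0 (MatK (r+1)) + place (r+1) r (MatK (r+2)) :
        Matrix (Fin (2*r+3)) (Fin (2*r+1)) ℂ) * U) i j =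
      if h : 1 ≤ (i:ℕ) ∧ (i:ℕ) ≤ r then U ⟨(i:ℕ)-1, by omega⟩ j
      else if h2 : r+2 ≤ (i:ℕ) then U ⟨(i:ℕ)-2, by omega⟩ j else 0 := by
  have hi := i.isLt
  rw [Matrix.mul_apply]
  simp only [B2_apply r hr]
  by_cases h : 1 ≤ (i:ℕ) ∧ (i:ℕ) ≤ r
  · rw [dif_pos h]
    have hcong : ∀ k : Fin (2*r+1),
        (if (i:ℕ) = (if (k:ℕ) < r then (k:ℕ)+1 else (k:ℕ)+2) then (1:ℂ) else 0) =
        if (k:ℕ) = (i:ℕ)-1 then 1 else 0 := fun k => by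
      have hk := k.isLt
      exact if_congr (by split_ifs <;> omega) rfl rfl
    simp only [hcong]
    exact ind_mul_sum (fun k => U k j) ((i:ℕ)-1) (by omega) _ (fun k => rfl)
  · rw [dif_neg h]
    by_cases h2 : r+2 ≤ (i:ℕ)
    · rw [dif_pos h2]
      have hcong : ∀ k : Fin (2*r+1),
          (if (i:ℕ) = (if (k:ℕ) < r then (k:ℕ)+1 else (k:ℕ)+2) then (1:ℂ) else 0) =
          if (k:ℕ) = (i:ℕ)-2 then 1 else 0 := fun k => by
        have hk := k.isLt
        exact if_congr (by split_ifs <;> omega) rfl rfl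
      simp only [hcong]
      exact ind_mul_sum (fun k => U k j) ((i:ℕ)-2) (by omega) _ (fun k => rfl)
    · rw [dif_neg h2]
      refine Finset.sum_eq_zero (fun k _ => ?_)
      have hk := k.isLt
      rw [if_neg (by split_ifs <;> omega), zero_mul]
lemma isUnit_inv_of_isUnit {n : ℕ} (U : Matrix (Fin n) (Fin n) ℂ) (h : IsUnit U) :
    IsUnit U⁻¹ := by
  have hd := (Matrix.isUnit_iff_isUnit_det U).mp h
  exact ⟨⟨U⁻¹, U, Matrix.nonsing_inv_mul U hd, Matrix.mul_nonsing_inv U hd⟩, rfl⟩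

set_option maxHeartbeats 2000000 in
lemma unitWm (β γ : ℂ) (hβ : β ≠ 0) (p n : ℕ) (hn : n = 2*p+3) :
    IsUnit (Matrix.of (fun i k : Fin n => Wm β γ p (i:ℕ) (k:ℕ))) := by
  rw [Matrix.isUnit_iff_isUnit_det, isUnit_iff_ne_zero]
  intro hdet
  obtain ⟨v, hv0, hv⟩ := Matrix.exists_vecMul_eq_zero_iff.mpr hdet
  have hcol : ∀ c : Fin n, (∑ i2 : Fin n, v i2 * Wm β γ p (i2:ℕ) (c:ℕ)) = 0 := by
    intro c
    have h1 := congrFun hv c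
    simpa [Matrix.vecMul, dotProduct, Matrix.of_apply] using h1
  have e0 : v ⟨0, by omega⟩ = 0 := by
    have h1 := hcol ⟨p, by omega⟩
    simp only [Fin.val_mk] at h1
    rw [sumOne _ ⟨0, by omega⟩ ?_] at h1
    · simp only [Fin.val_mk] at h1
      rw [show Wm β γ p 0 p = β^2 from by
        rw [Wm_low β γ p 0 p (by omega)]
        split_ifs <;> first | (exfalso; omega) | ring1 | (exfalso; tauto)] at h1
      rcases mul_eq_zero.mp h1 with h2 | h2
      · exact h2
      · exact absurd ((pow_eq_zero_iff two_ne_zero).mp h2) hβ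
    · intro i2 hi2
      have hne : (i2:ℕ) ≠ 0 := fun hh => hi2 (Fin.ext hh)
      have hlt := i2.isLt
      have hz : Wm β γ p (i2:ℕ) p = 0 := by
        simp only [Wm]
        split_ifs <;> first | (exfalso; omega) | ring1 | (exfalso; tauto)
      simp only [hz, mul_zero]
  have e1 : v ⟨p+1, by omega⟩ = 0 := by
    have h1 := hcol ⟨p+1, by omega⟩
    simp only [Fin.val_mk] at h1
    rw [sumTwo _ ⟨0, by omega⟩ ⟨p+1, by omega⟩ (finmk_ne _ _ (by omega)) ?_] at h1
    · simp only [Fin.val_mk] at h1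
      rw [show Wm β γ p 0 (p+1) = β*γ from by
          rw [Wm_low β γ p 0 (p+1) (by omega)]
          split_ifs <;> first | (exfalso; omega) | ring1 | (exfalso; tauto),
        show Wm β γ p (p+1) (p+1) = β from by
          rw [Wm_high β γ p (p+1) (p+1) (by omega)]
          split_ifs <;> first | (exfalso; omega) | ring1 | (exfalso; tauto),
        e0, zero_mul, zero_add] at h1
      exact (mul_eq_zero.mp h1).resolve_right hβ
    · intro i2 hi2a hi2b
      have hnea : (i2:ℕ) ≠ 0 := fun hh => hi2a (Fin.ext hh)
      have hneb : (i2:ℕ) ≠ p+1 := fun hh => hi2b (Fin.ext hh)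
      have hlt := i2.isLt
      have hz : Wm β γ p (i2:ℕ) (p+1) = 0 := by
        simp only [Wm]
        split_ifs <;> first | (exfalso; omega) | ring1 | (exfalso; tauto)
      simp only [hz, mul_zero]
  have hz : ∀ m : ℕ, ∀ _hm1 : m ≤ p+1,
      (m ≤ p → v ⟨m, by omega⟩ = 0) ∧ v ⟨p+1+m, by omega⟩ = 0 := by
    intro m
    induction m with
    | zero =>
      intro _
      refine ⟨fun _ => e0, ?_⟩
      simpa using e1
    | succ m ih =>
      intro hm1
      obtain ⟨ih1, ih2⟩ := ih (by omega)
      constructor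
      · intro hmp
        have h1 := hcol ⟨m, by omega⟩
        simp only [Fin.val_mk] at h1
        rw [sumThree _ ⟨m, by omega⟩ ⟨m+1, by omega⟩ ⟨p+1+m, by omega⟩
            (finmk_ne _ _ (by omega)) (finmk_ne _ _ (by omega))
            (finmk_ne _ _ (by omega)) ?_] at h1
        · simp only [Fin.val_mk] at h1
          rw [show Wm β γ p m m = -γ from by
              rw [Wm_low β γ p m m (by omega)]
              split_ifs <;> first | (exfalso; omega) | ring1 | (exfalso; tauto),
            show Wm β γ p (m+1) m = β from by
              rw [Wm_low β γ p (m+1) m (by omega)]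
              split_ifs <;> first | (exfalso; omega) | ring1 | (exfalso; tauto),
            show Wm β γ p (p+1+m) m = -1 from by
              rw [Wm_high β γ p (p+1+m) m (by omega)]
              split_ifs <;> first | (exfalso; omega) | ring1 | (exfalso; tauto),
            ih1 (by omega), ih2, zero_mul, zero_mul, zero_add, add_zero] at h1
          exact (mul_eq_zero.mp h1).resolve_right hβ
        · intro i2 h1a h1b h1c
          have hna : (i2:ℕ) ≠ m := fun hh => h1a (Fin.ext hh)
          have hnb : (i2:ℕ) ≠ m+1 := fun hh => h1b (Fin.ext hh)
          have hnc : (i2:ℕ) ≠ p+1+m := fun hh => h1c (Fin.ext hh)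
          have hlt := i2.isLt
          have hzz : Wm β γ p (i2:ℕ) m = 0 := by
            simp only [Wm]
            split_ifs <;> first | (exfalso; omega) | ring1 | (exfalso; tauto)
          simp only [hzz, mul_zero]
      · have h1 := hcol ⟨p+2+m, by omega⟩
        simp only [Fin.val_mk] at h1
        rw [sumThree _ ⟨m, by omega⟩ ⟨p+1+m, by omega⟩ ⟨p+2+m, by omega⟩
            (finmk_ne _ _ (by omega)) (finmk_ne _ _ (by omega))
            (finmk_ne _ _ (by omega)) ?_] at h1
        · simp only [Fin.val_mk] at h1
          rw [show Wm β γ p m (p+2+m) = γ^2 from by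
              rw [Wm_low β γ p m (p+2+m) (by omega)]
              split_ifs <;> first | (exfalso; omega) | ring1 | (exfalso; tauto),
            show Wm β γ p (p+1+m) (p+2+m) = γ from by
              rw [Wm_high β γ p (p+1+m) (p+2+m) (by omega)]
              split_ifs <;> first | (exfalso; omega) | ring1 | (exfalso; tauto),
            show Wm β γ p (p+2+m) (p+2+m) = β from by
              rw [Wm_high β γ p (p+2+m) (p+2+m) (by omega)]
              split_ifs <;> first | (exfalso; omega) | ring1 | (exfalso; tauto),
            ih1 (by omega), ih2, zero_mul, zero_mul, zero_add, zero_add] at h1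
          have hv2 := (mul_eq_zero.mp h1).resolve_right hβ
          have hidx : p+1+(m+1) = p+2+m := by omega
          simpa [hidx] using hv2
        · intro i2 h1a h1b h1c
          have hna : (i2:ℕ) ≠ m := fun hh => h1a (Fin.ext hh)
          have hnb : (i2:ℕ) ≠ p+1+m := fun hh => h1b (Fin.ext hh)
          have hnc : (i2:ℕ) ≠ p+2+m := fun hh => h1c (Fin.ext hh)
          have hlt := i2.isLt
          have hzz : Wm β γ p (i2:ℕ) (p+2+m) = 0 := by
            simp only [Wm]
            split_ifs <;> first | (exfalso; omega) | ring1 | (exfalso; tauto)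
          simp only [hzz, mul_zero]
  refine hv0 (funext fun i => ?_)
  have hlt := i.isLt
  rcases Nat.lt_or_ge (i:ℕ) (p+1) with h | h
  · have := (hz (i:ℕ) (by omega)).1 (by omega)
    simpa using this
  · have h2 := (hz ((i:ℕ)-(p+1)) (by omega)).2
    have hidx : p+1+((i:ℕ)-(p+1)) = (i:ℕ) := by omega
    simp only [hidx] at h2
    simpa using h2

set_option maxHeartbeats 2000000 in
lemma unitW0 (γ : ℂ) (hγ : γ ≠ 0) (p n : ℕ) (hn : n = 2*p+3) :
    IsUnit (Matrix.of (fun i k : Fin n => W0m γ p (i:ℕ) (k:ℕ))) := by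
  rw [Matrix.isUnit_iff_isUnit_det, isUnit_iff_ne_zero]
  intro hdet
  obtain ⟨v, hv0, hv⟩ := Matrix.exists_vecMul_eq_zero_iff.mpr hdet
  have hcol : ∀ c : Fin n, (∑ i2 : Fin n, v i2 * W0m γ p (i2:ℕ) (c:ℕ)) = 0 := by
    intro c
    have h1 := congrFun hv c
    simpa [Matrix.vecMul, dotProduct, Matrix.of_apply] using h1
  have hlow : ∀ m : ℕ, ∀ _hm : m ≤ p, v ⟨m, by omega⟩ = 0 := by
    intro m hm
    have h1 := hcol ⟨p+2+m, by omega⟩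
    simp only [Fin.val_mk] at h1
    rw [sumOne _ ⟨m, by omega⟩ ?_] at h1
    · simp only [Fin.val_mk] at h1
      rw [show W0m γ p m (p+2+m) = γ^2 from by
        rw [W0m_low γ p m (p+2+m) (by omega)]
        split_ifs <;> first | (exfalso; omega) | ring1 | (exfalso; tauto)] at h1
      rcases mul_eq_zero.mp h1 with h2 | h2
      · exact h2
      · exact absurd ((pow_eq_zero_iff two_ne_zero).mp h2) hγ
    · intro i2 hi2
      have hne : (i2:ℕ) ≠ m := fun hh => hi2 (Fin.ext hh)
      have hlt := i2.isLt
      have hzz : W0m γ p (i2:ℕ) (p+2+m) = 0 := by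
        simp only [W0m]
        split_ifs <;> first | (exfalso; omega) | ring1 | (exfalso; tauto)
      simp only [hzz, mul_zero]
  have ep1 : v ⟨p+1, by omega⟩ = 0 := by
    have h1 := hcol ⟨p, by omega⟩
    simp only [Fin.val_mk] at h1
    rw [sumOne _ ⟨p+1, by omega⟩ ?_] at h1
    · simp only [Fin.val_mk] at h1
      rw [show W0m γ p (p+1) p = -γ from by
        rw [W0m_high γ p (p+1) p (by omega)]
        split_ifs <;> first | (exfalso; omega) | ring1 | (exfalso; tauto)] at h1
      rcases mul_eq_zero.mp h1 with h2 | h2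
      · exact h2
      · exact absurd (by simpa using h2) hγ
    · intro i2 hi2
      have hne : (i2:ℕ) ≠ p+1 := fun hh => hi2 (Fin.ext hh)
      have hlt := i2.isLt
      have hzz : W0m γ p (i2:ℕ) p = 0 := by
        simp only [W0m]
        split_ifs <;> first | (exfalso; omega) | ring1 | (exfalso; tauto)
      simp only [hzz, mul_zero]
  have ep2 : v ⟨p+2, by omega⟩ = 0 := by
    have h1 := hcol ⟨p+1, by omega⟩
    simp only [Fin.val_mk] at h1
    rw [sumOne _ ⟨p+2, by omega⟩ ?_] at h1
    · simp only [Fin.val_mk] at h1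
      rw [show W0m γ p (p+2) (p+1) = -γ from by
        rw [W0m_high γ p (p+2) (p+1) (by omega)]
        split_ifs <;> first | (exfalso; omega) | ring1 | (exfalso; tauto)] at h1
      rcases mul_eq_zero.mp h1 with h2 | h2
      · exact h2
      · exact absurd (by simpa using h2) hγ
    · intro i2 hi2
      have hne : (i2:ℕ) ≠ p+2 := fun hh => hi2 (Fin.ext hh)
      have hlt := i2.isLt
      have hzz : W0m γ p (i2:ℕ) (p+1) = 0 := by
        simp only [W0m]
        split_ifs <;> first | (exfalso; omega) | ring1 | (exfalso; tauto)
      simp only [hzz, mul_zero]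
  have hhigh : ∀ m : ℕ, ∀ _hm : m+1 ≤ p, v ⟨p+3+m, by omega⟩ = 0 := by
    intro m hm
    have h1 := hcol ⟨m, by omega⟩
    simp only [Fin.val_mk] at h1
    rw [sumTwo _ ⟨m, by omega⟩ ⟨p+3+m, by omega⟩ (finmk_ne _ _ (by omega)) ?_] at h1
    · simp only [Fin.val_mk] at h1
      rw [show W0m γ p m m = -γ from by
          rw [W0m_low γ p m m (by omega)]
          split_ifs <;> first | (exfalso; omega) | ring1 | (exfalso; tauto),
        show W0m γ p (p+3+m) m = -1 from by
          rw [W0m_high γ p (p+3+m) m (by omega)]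
          split_ifs <;> first | (exfalso; omega) | ring1 | (exfalso; tauto),
        hlow m (by omega), zero_mul, zero_add] at h1
      simpa using h1
    · intro i2 hi2a hi2b
      have hnea : (i2:ℕ) ≠ m := fun hh => hi2a (Fin.ext hh)
      have hneb : (i2:ℕ) ≠ p+3+m := fun hh => hi2b (Fin.ext hh)
      have hlt := i2.isLt
      have hzz : W0m γ p (i2:ℕ) m = 0 := by
        simp only [W0m]
        split_ifs <;> first | (exfalso; omega) | ring1 | (exfalso; tauto)
      simp only [hzz, mul_zero]
  refine hv0 (funext fun i => ?_)
  have hlt := i.isLt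
  rcases (by omega : (i:ℕ) ≤ p ∨ (i:ℕ) = p+1 ∨ (i:ℕ) = p+2 ∨ p+3 ≤ (i:ℕ)) with h | h | h | h
  · have := hlow (i:ℕ) h
    simpa using this
  · have := ep1
    rw [show (⟨p+1, by omega⟩ : Fin n) = i from Fin.ext (by simpa using h.symm)] at this
    exact this
  · have := ep2
    rw [show (⟨p+2, by omega⟩ : Fin n) = i from Fin.ext (by simpa using h.symm)] at this
    exact this
  · have h2 := hhigh ((i:ℕ)-(p+3)) (by omega)
    have hidx : p+3+((i:ℕ)-(p+3)) = (i:ℕ) := by omega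
    simp only [hidx] at h2
    simpa using h2
theorem bif_tri_r_rp3 (r : ℕ) (hr : 1 ≤ r) (β γ : ℂ) (hβγ : (β, γ) ≠ (0, 0)) :
    PairEquiv
      (place 0 0 (MatF r) + place r (r - 1) (MatF (r + 3)) :
        Matrix (Fin (2 * r + 3)) (Fin (2 * r + 1)) ℂ)
      (place 0 0 (MatK r) + place r (r - 1) (MatK (r + 3)) + β • Estd 1 r + γ • Estd 1 (r + 1))
      (place 0 0 (MatF (r + 1)) + place (r + 1) r (MatF (r + 2)))
      (place 0 0 (MatK (r + 1)) + place (r + 1) r (MatK (r + 2))) := by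
  obtain ⟨s, rfl⟩ : ∃ s, r = s + 1 := ⟨r - 1, by omega⟩
  by_cases hβ : β = 0
  · -- case β = 0, γ ≠ 0
    subst hβ
    have hγ : γ ≠ 0 := fun h => hβγ (by rw [h])
    set R : Matrix (Fin (2*(s+1)+3)) (Fin (2*(s+1)+3)) ℂ :=
      Matrix.of (fun i k : Fin (2*(s+1)+3) => W0m γ (s+1) (i:ℕ) (k:ℕ)) with hRdef
    set U : Matrix (Fin (2*(s+1)+1)) (Fin (2*(s+1)+1)) ℂ :=
      Matrix.of (fun i k : Fin (2*(s+1)+1) => W0m γ s (i:ℕ) (k:ℕ)) with hUdef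
    have hU : IsUnit U := unitW0 γ hγ s (2*(s+1)+1) (by omega)
    have hR : IsUnit R := unitW0 γ hγ (s+1) (2*(s+1)+3) (by omega)
    have hUdet := (Matrix.isUnit_iff_isUnit_det U).mp hU
    have h1 : R * (place 0 0 (MatF (s+1)) + place (s+1) (s+1-1) (MatF (s+1+3)) : Matrix (Fin (2*(s+1)+3)) (Fin (2*(s+1)+1)) ℂ) =
        (place 0 0 (MatF (s+1+1)) + place (s+1+1) (s+1) (MatF (s+1+2)) : Matrix (Fin (2*(s+1)+3)) (Fin (2*(s+1)+1)) ℂ) * U := by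
      ext i j
      rw [RA1 (s+1) (by omega) R i j, BU1 (s+1) (by omega) U i j]
      have K := key1z γ s (i:ℕ) (j:ℕ) (by omega) (by omega)
      split_ifs at K ⊢ <;> first | exact K | (exfalso; omega)
    have h2 : R * (place 0 0 (MatK (s+1)) + place (s+1) (s+1-1) (MatK (s+1+3)) +
          (0:ℂ) • Estd 1 (s+1) + γ • Estd 1 (s+1+1) :
          Matrix (Fin (2*(s+1)+3)) (Fin (2*(s+1)+1)) ℂ) =
        (place 0 0 (MatK (s+1+1)) + place (s+1+1) (s+1) (MatK (s+1+2)) : Matrix (Fin (2*(s+1)+3)) (Fin (2*(s+1)+1)) ℂ) * U := by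
      ext i j
      rw [RA2 (s+1) (by omega) 0 γ R i j, BU2 (s+1) (by omega) U i j]
      have K := key2z γ s (i:ℕ) (j:ℕ) (by omega) (by omega)
      split_ifs at K ⊢ <;> first | exact K | (exfalso; omega)
    refine ⟨R, U⁻¹, hR, isUnit_inv_of_isUnit U hU, ?_, ?_⟩
    · rw [h1, Matrix.mul_assoc, Matrix.mul_nonsing_inv U hUdet, Matrix.mul_one]
    · rw [h2, Matrix.mul_assoc, Matrix.mul_nonsing_inv U hUdet, Matrix.mul_one]
  · -- case β ≠ 0
    set R : Matrix (Fin (2*(s+1)+3)) (Fin (2*(s+1)+3)) ℂ :=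
      Matrix.of (fun i k : Fin (2*(s+1)+3) => Wm β γ (s+1) (i:ℕ) (k:ℕ)) with hRdef
    set U : Matrix (Fin (2*(s+1)+1)) (Fin (2*(s+1)+1)) ℂ :=
      Matrix.of (fun i k : Fin (2*(s+1)+1) => Wm β γ s (i:ℕ) (k:ℕ)) with hUdef
    have hU : IsUnit U := unitWm β γ hβ s (2*(s+1)+1) (by omega)
    have hR : IsUnit R := unitWm β γ hβ (s+1) (2*(s+1)+3) (by omega)
    have hUdet := (Matrix.isUnit_iff_isUnit_det U).mp hU
    have h1 : R * (place 0 0 (MatF (s+1)) + place (s+1) (s+1-1) (MatF (s+1+3)) : Matrix (Fin (2*(s+1)+3)) (Fin (2*(s+1)+1)) ℂ) =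
        (place 0 0 (MatF (s+1+1)) + place (s+1+1) (s+1) (MatF (s+1+2)) : Matrix (Fin (2*(s+1)+3)) (Fin (2*(s+1)+1)) ℂ) * U := by
      ext i j
      rw [RA1 (s+1) (by omega) R i j, BU1 (s+1) (by omega) U i j]
      have K := key1 β γ s (i:ℕ) (j:ℕ) (by omega) (by omega)
      split_ifs at K ⊢ <;> first | exact K | (exfalso; omega)
    have h2 : R * (place 0 0 (MatK (s+1)) + place (s+1) (s+1-1) (MatK (s+1+3)) +
          β • Estd 1 (s+1) + γ • Estd 1 (s+1+1) :
          Matrix (Fin (2*(s+1)+3)) (Fin (2*(s+1)+1)) ℂ) =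
        (place 0 0 (MatK (s+1+1)) + place (s+1+1) (s+1) (MatK (s+1+2)) : Matrix (Fin (2*(s+1)+3)) (Fin (2*(s+1)+1)) ℂ) * U := by
      ext i j
      rw [RA2 (s+1) (by omega) β γ R i j, BU2 (s+1) (by omega) U i j]
      have K := key2 β γ s (i:ℕ) (j:ℕ) (by omega) (by omega)
      split_ifs at K ⊢ <;> first | exact K | (exfalso; omega)
    refine ⟨R, U⁻¹, hR, isUnit_inv_of_isUnit U hU, ?_, ?_⟩
    · rw [h1, Matrix.mul_assoc, Matrix.mul_nonsing_inv U hUdet, Matrix.mul_one]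
    · rw [h2, Matrix.mul_assoc, Matrix.mul_nonsing_inv U hUdet, Matrix.mul_one]
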